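/- arXiv:1702.07936 — 4 statements merged into one kernel-verified Lean document; each statement's English description precedes it below -/
import Mathlib

section
/- Fix $n, m \in \mathbb{N}$, a price vector $q \in \mathbb{R}^m_{++}$, endowments $x_i \in \mathbb{R}^m_+$, liability vectors $\bar p_i \in \mathbb{R}^m_+$, and relative liability matrices $A^k \in \mathbb{R}^{n\times n}_+$ with $\sum_{j=1}^n a_{ij}^k = 1$ for all $i,k$. Suppose $y^\uparrow, y^\downarrow \in \mathbb{R}^{n\times m}_+$ both satisfy the budget-balance equations $q^\mathsf{T} y_i = q^\mathsf{T} x_i + \sum_{k=1}^m q_k \sum_{j=1}^n a_{ji}^k (\bar p_j^k \wedge y_j^k)$ for all $i$, and $y^\uparrow \ge y^\downarrow$ componentwise. Then $\sum_{i=1}^n q^\mathsf{T}(y_i^\uparrow - \bar p_i)^+ = \sum_{i=1}^n q^\mathsf{T}(y_i^\downarrow - \bar p_i)^+$, and consequently $(y_i^\uparrow - \bar p_i)^+ = (y_i^\downarrow - \bar p_i)^+$ componentwise for every firm $i$. -/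
lemma conserve (n m : ℕ) (q : Fin m → ℝ)
    (x : Fin n → Fin m → ℝ)
    (pbar : Fin n → Fin m → ℝ)
    (a : Fin m → Fin n → Fin n → ℝ)
    (hrow : ∀ k i, ∑ j, a k i j = 1)
    (y : Fin n → Fin m → ℝ)
    (hb : ∀ i, ∑ k, q k * y i k =
      ∑ k, q k * x i k + ∑ k, q k * ∑ j, a k j i * min (pbar j k) (y j k)) :
    ∑ i, ∑ k, q k * max (y i k - pbar i k) 0 = ∑ i, ∑ k, q k * x i k := by
  have h1 : ∑ i, ∑ k, q k * y i k =
      ∑ i, ∑ k, q k * x i k + ∑ k, q k * ∑ j, min (pbar j k) (y j k) := by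
    calc ∑ i, ∑ k, q k * y i k
        = ∑ i, (∑ k, q k * x i k + ∑ k, q k * ∑ j, a k j i * min (pbar j k) (y j k)) := by
          exact Finset.sum_congr rfl (fun i _ => hb i)
      _ = ∑ i, ∑ k, q k * x i k +
          ∑ i, ∑ k, q k * ∑ j, a k j i * min (pbar j k) (y j k) := by
          rw [Finset.sum_add_distrib]
      _ = ∑ i, ∑ k, q k * x i k + ∑ k, q k * ∑ j, min (pbar j k) (y j k) := by
          congr 1
          rw [Finset.sum_comm]
          refine Finset.sum_congr rfl (fun k _ => ?_)
          rw [← Finset.mul_sum]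
          congr 1
          rw [Finset.sum_comm]
          refine Finset.sum_congr rfl (fun j _ => ?_)
          rw [← Finset.sum_mul, hrow, one_mul]
  have hmax : ∀ i k, q k * max (y i k - pbar i k) 0
      = q k * y i k - q k * min (pbar i k) (y i k) := by
    intro i k
    have : max (y i k - pbar i k) 0 = y i k - min (pbar i k) (y i k) := by
      rcases le_total (pbar i k) (y i k) with h | h
      · rw [min_eq_left h, max_eq_left (by linarith)]
      · rw [min_eq_right h, max_eq_right (by linarith)]; ring
    rw [this, mul_sub]
  calc ∑ i, ∑ k, q k * max (y i k - pbar i k) 0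
      = ∑ i, ∑ k, (q k * y i k - q k * min (pbar i k) (y i k)) := by
        exact Finset.sum_congr rfl fun i _ => Finset.sum_congr rfl fun k _ => hmax i k
    _ = ∑ i, ∑ k, q k * y i k - ∑ i, ∑ k, q k * min (pbar i k) (y i k) := by
        rw [← Finset.sum_sub_distrib]
        exact Finset.sum_congr rfl fun i _ => by rw [Finset.sum_sub_distrib]
    _ = ∑ i, ∑ k, q k * x i k := by
        rw [h1]
        have : ∑ i, ∑ k, q k * min (pbar i k) (y i k)
            = ∑ k, q k * ∑ j, min (pbar j k) (y j k) := by
          rw [Finset.sum_comm]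
          exact Finset.sum_congr rfl fun k _ => by rw [Finset.mul_sum]
        rw [this]; ring

/-- Conservation of value (Lemma 3.1(2)): if `yup ≥ ydown` both satisfy the
budget-balance equations under price `q ≫ 0`, then the aggregate and componentwise
positive equities coincide. -/
theorem stmt_1 (n m : ℕ) (q : Fin m → ℝ) (hq : ∀ k, 0 < q k)
    (x : Fin n → Fin m → ℝ) (hx : ∀ i k, 0 ≤ x i k)
    (pbar : Fin n → Fin m → ℝ) (hpbar : ∀ i k, 0 ≤ pbar i k)
    (a : Fin m → Fin n → Fin n → ℝ) (ha : ∀ k i j, 0 ≤ a k i j)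
    (hrow : ∀ k i, ∑ j, a k i j = 1)
    (yup ydown : Fin n → Fin m → ℝ)
    (hyup : ∀ i k, 0 ≤ yup i k) (hydown : ∀ i k, 0 ≤ ydown i k)
    (hbup : ∀ i, ∑ k, q k * yup i k =
      ∑ k, q k * x i k + ∑ k, q k * ∑ j, a k j i * min (pbar j k) (yup j k))
    (hbdown : ∀ i, ∑ k, q k * ydown i k =
      ∑ k, q k * x i k + ∑ k, q k * ∑ j, a k j i * min (pbar j k) (ydown j k))
    (hle : ∀ i k, ydown i k ≤ yup i k) :
    (∑ i, ∑ k, q k * max (yup i k - pbar i k) 0) =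
      (∑ i, ∑ k, q k * max (ydown i k - pbar i k) 0) ∧
    ∀ i k, max (yup i k - pbar i k) 0 = max (ydown i k - pbar i k) 0 := by
  have hu := conserve n m q x pbar a hrow yup hbup
  have hd := conserve n m q x pbar a hrow ydown hbdown
  have hagg : (∑ i, ∑ k, q k * max (yup i k - pbar i k) 0) =
      (∑ i, ∑ k, q k * max (ydown i k - pbar i k) 0) := hu.trans hd.symm
  refine ⟨hagg, ?_⟩
  have hzero : ∑ i, ∑ k, (q k * max (yup i k - pbar i k) 0
      - q k * max (ydown i k - pbar i k) 0) = 0 := by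
    simp only [Finset.sum_sub_distrib]
    rw [hagg, sub_self]
  have hnn : ∀ i ∈ Finset.univ, ∀ k ∈ Finset.univ,
      (0:ℝ) ≤ q k * max (yup i k - pbar i k) 0 - q k * max (ydown i k - pbar i k) 0 := by
    intro i _ k _
    have : max (ydown i k - pbar i k) 0 ≤ max (yup i k - pbar i k) 0 :=
      max_le_max (by linarith [hle i k]) le_rfl
    nlinarith [hq k]
  intro i k
  have := (Finset.sum_eq_zero_iff_of_nonneg (fun i _ =>
    Finset.sum_nonneg (fun k hk => hnn i (Finset.mem_univ i) k hk))).mp hzero i (Finset.mem_univ i)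
  have h2 := (Finset.sum_eq_zero_iff_of_nonneg (hnn i (Finset.mem_univ i))).mp this k (Finset.mem_univ k)
  have hqk := hq k
  nlinarith
end

section
/- Consider the $n+1$ node system (firms $1,\dots,n$ plus a societal node $0$ with no obligations into the network, i.e., $L_{0i}^k = 0$ for all $i,k$) where $L_{i0}^k > 0$ for every firm $i$ and asset $k$. Suppose $y^\uparrow \ge y^\downarrow$ are the greatest and least clearing holdings at price $q \in \mathbb{R}^m_{++}$, and suppose $(y_i^\uparrow - \bar p_i)^+ = (y_i^\downarrow - \bar p_i)^+$ for all firms $i$ (equal positive equity). Then $y^\uparrow = y^\downarrow$, i.e., the clearing holdings are unique. -/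
/-- Uniqueness of clearing holdings (Corollary 3.2): with a societal sink node `0`
(no obligations into the network, but every firm owes it a positive amount in every
asset), two ordered clearing solutions with equal positive equity must coincide. -/
theorem stmt_3 (n m : ℕ) (q : Fin m → ℝ) (hq : ∀ k, 0 < q k)
    (x : Fin (n+1) → Fin m → ℝ) (hx : ∀ i k, 0 ≤ x i k)
    (pbar : Fin (n+1) → Fin m → ℝ) (hpbar : ∀ i k, 0 ≤ pbar i k)
    (hpbar0 : ∀ k, pbar 0 k = 0)
    (a : Fin m → Fin (n+1) → Fin (n+1) → ℝ) (ha : ∀ k i j, 0 ≤ a k i j)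
    (hrow : ∀ k i, ∑ j, a k i j = 1)
    (ha0 : ∀ (k : Fin m) (i : Fin (n+1)), i ≠ 0 → 0 < a k i 0)
    (yup ydown : Fin (n+1) → Fin m → ℝ)
    (hyup : ∀ i k, 0 ≤ yup i k) (hydown : ∀ i k, 0 ≤ ydown i k)
    (hbup : ∀ i, ∑ k, q k * yup i k =
      ∑ k, q k * x i k + ∑ k, q k * ∑ j, a k j i * min (pbar j k) (yup j k))
    (hbdown : ∀ i, ∑ k, q k * ydown i k =
      ∑ k, q k * x i k + ∑ k, q k * ∑ j, a k j i * min (pbar j k) (ydown j k))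
    (hle : ∀ i k, ydown i k ≤ yup i k)
    (heq : ∀ i k, max (yup i k - pbar i k) 0 = max (ydown i k - pbar i k) 0) :
    yup = ydown := by
  -- decomposition y = min(pbar,y) + max(y-pbar,0)
  have hdecomp : ∀ (p y : ℝ), y = min p y + max (y - p) 0 := by
    intro p y
    rcases le_total y p with h | h
    · simp [min_eq_right h, max_eq_right (by linarith : y - p ≤ 0)]
    · simp [min_eq_left h, max_eq_left (by linarith : 0 ≤ y - p)]
  -- node 0: equal holdings
  have h0 : ∀ k, yup 0 k = ydown 0 k := by
    intro k
    have := heq 0 k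
    rw [hpbar0 k] at this
    simpa [max_eq_left (hyup 0 k), max_eq_left (hydown 0 k)] using this
  -- nonneg differences of min parts
  set d : Fin (n+1) → Fin m → ℝ :=
    fun j k => min (pbar j k) (yup j k) - min (pbar j k) (ydown j k) with hd
  have hdnn : ∀ j k, 0 ≤ d j k := by
    intro j k
    have : min (pbar j k) (ydown j k) ≤ min (pbar j k) (yup j k) :=
      min_le_min le_rfl (hle j k)
    simpa [hd] using sub_nonneg.mpr this
  -- budget at node 0 gives the sum of weighted differences = 0
  have hsum0 : ∑ k, q k * ∑ j, a k j 0 * d j k = 0 := by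
    have h1 := hbup 0
    have h2 := hbdown 0
    have hl : ∑ k, q k * yup 0 k = ∑ k, q k * ydown 0 k := by
      apply Finset.sum_congr rfl; intro k _; rw [h0 k]
    have : ∑ k, q k * ∑ j, a k j 0 * min (pbar j k) (yup j k)
        = ∑ k, q k * ∑ j, a k j 0 * min (pbar j k) (ydown j k) := by
      linarith [h1, h2, hl]
    calc ∑ k, q k * ∑ j, a k j 0 * d j k
        = ∑ k, (q k * ∑ j, a k j 0 * min (pbar j k) (yup j k)
            - q k * ∑ j, a k j 0 * min (pbar j k) (ydown j k)) := by
          apply Finset.sum_congr rfl; intro k _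
          rw [← mul_sub, ← Finset.sum_sub_distrib]
          congr 1; apply Finset.sum_congr rfl; intro j _
          simp [hd, mul_sub]
      _ = 0 := by rw [Finset.sum_sub_distrib, this, sub_self]
  -- each summand is nonneg hence zero
  have hterm : ∀ k j, a k j 0 * d j k = 0 := by
    intro k j
    have hknn : ∀ k' ∈ Finset.univ, (0:ℝ) ≤ q k' * ∑ j, a k' j 0 * d j k' := by
      intro k' _
      exact mul_nonneg (hq k').le (Finset.sum_nonneg fun j _ =>
        mul_nonneg (ha k' j 0) (hdnn j k'))
    have hk0 : q k * ∑ j, a k j 0 * d j k = 0 :=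
      (Finset.sum_eq_zero_iff_of_nonneg hknn).mp hsum0 k (Finset.mem_univ k)
    have hs0 : ∑ j, a k j 0 * d j k = 0 := by
      rcases mul_eq_zero.mp hk0 with h | h
      · exact absurd h (hq k).ne'
      · exact h
    have hjnn : ∀ j' ∈ Finset.univ, (0:ℝ) ≤ a k j' 0 * d j' k := fun j' _ =>
      mul_nonneg (ha k j' 0) (hdnn j' k)
    exact (Finset.sum_eq_zero_iff_of_nonneg hjnn).mp hs0 j (Finset.mem_univ j)
  -- conclude
  funext i k
  by_cases hi : i = 0
  · subst hi; exact h0 k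
  · have hdi : d i k = 0 := by
      have := hterm k i
      rcases mul_eq_zero.mp this with h | h
      · exact absurd h (ha0 k i hi).ne'
      · exact h
    have hmin : min (pbar i k) (yup i k) = min (pbar i k) (ydown i k) := by
      have := sub_eq_zero.mp hdi
      exact this
    calc yup i k = min (pbar i k) (yup i k) + max (yup i k - pbar i k) 0 :=
          hdecomp _ _
      _ = min (pbar i k) (ydown i k) + max (ydown i k - pbar i k) 0 := by
          rw [hmin, heq]
      _ = ydown i k := (hdecomp _ _).symm
end

section
/- Consider the two-bank, two-asset network where bank 1 has endowment $x_1 = (0,2)$ and owes $L_{12} = (1,0)$ to bank 2, and bank 2 has endowment $x_2 = (2,0)$ and owes $L_{21} = (0,1)$ to bank 1. Fix prices $q = (1, q_2)$ with $q_2 > 0$. Then the holdings $y_1^*(q) = (\min(1, 3q_2),\; (2 + \min(1, 3/q_2) - 1/q_2)^+)$ and $y_2^*(q) = ((2 + \min(1, 3q_2) - q_2)^+,\; \min(1, 3/q_2))$ satisfy the clearing conditions: (i) each bank's payment in each asset is the minimum of its liability and its holdings in that asset; (ii) budget balance: $q^\mathsf{T} y_i^* = q^\mathsf{T} x_i + q^\mathsf{T}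 (\bar p_j \wedge y_j^*)$ where $j \ne i$ and $\bar p_1 = (1,0)$, $\bar p_2 = (0,1)$; (iii) limited liability and absolute priority: if a bank's total value $q^\mathsf{T}(x_i + \bar p_j \wedge y_j^*)$ is at least $q^\mathsf{T}\bar p_i$ then $y_i^* \ge \bar p_i$. -/
/-- Example 3.5: explicit clearing solution for the two-bank, two-asset network.
Bank 1: endowment (0,2), liability p̄₁ = (1,0) to bank 2.
Bank 2: endowment (2,0), liability p̄₂ = (0,1) to bank 1.  Prices q = (1, q₂). -/
theorem stmt_4 (q2 : ℝ) (hq2 : 0 < q2) :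
    let y11 := min 1 (3*q2)
    let y12 := max (2 + min 1 (3/q2) - 1/q2) 0
    let y21 := max (2 + min 1 (3*q2) - q2) 0
    let y22 := min 1 (3/q2)
    -- nonnegative holdings
    (0 ≤ y11 ∧ 0 ≤ y12 ∧ 0 ≤ y21 ∧ 0 ≤ y22) ∧
    -- (ii) budget balance: q·yᵢ = q·xᵢ + q·(p̄ⱼ ∧ yⱼ), with payments given by
    -- (i) the componentwise min of liability and holdings
    (y11 + q2 * y12 = (0 + q2 * 2) + (min 0 y21 + q2 * min 1 y22)) ∧
    (y21 + q2 * y22 = (2 + q2 * 0) + (min 1 y11 + q2 * min 0 y12)) ∧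
    -- (iii) limited liability / absolute priority: solvent banks pay in full
    ((0 + q2 * 2) + (min 0 y21 + q2 * min 1 y22) ≥ 1 + q2 * 0 → y11 ≥ 1 ∧ y12 ≥ 0) ∧
    ((2 + q2 * 0) + (min 1 y11 + q2 * min 0 y12) ≥ 0 + q2 * 1 → y21 ≥ 0 ∧ y22 ≥ 1) := by
  intro y11 y12 y21 y22
  have hq2' : q2 ≠ 0 := ne_of_gt hq2
  -- resolve the inner mins depending on q2
  have hb : min 1 (3/q2) = if q2 ≤ 3 then (1:ℝ) else 3/q2 := by
    split_ifs with h
    · exact min_eq_left ((le_div_iff₀ hq2).mpr (by linarith))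
    · exact min_eq_right ((div_le_one hq2).mpr (by linarith))
  have ha : min 1 (3*q2) = if 1 ≤ 3*q2 then (1:ℝ) else 3*q2 := by
    split_ifs with h
    · exact min_eq_left h
    · exact min_eq_right (le_of_lt (not_le.mp h))
  have h11 : 0 ≤ y11 := le_min (by norm_num) (by positivity)
  have h12 : 0 ≤ y12 := le_max_right _ _
  have h21 : 0 ≤ y21 := le_max_right _ _
  have h22 : 0 ≤ y22 := le_min (by norm_num) (by positivity)
  have m21 : min 0 y21 = 0 := min_eq_left h21
  have m12 : min 0 y12 = 0 := min_eq_left h12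
  have m11 : min 1 y11 = y11 := min_eq_right (min_le_left _ _)
  have m22 : min 1 y22 = y22 := min_eq_right (min_le_left _ _)
  refine ⟨⟨h11, h12, h21, h22⟩, ?_, ?_, ?_, ?_⟩
  · -- budget balance for bank 1
    rw [m21, m22]
    show min 1 (3*q2) + q2 * max (2 + min 1 (3/q2) - 1/q2) 0 = 0 + q2*2 + (0 + q2 * min 1 (3/q2))
    rw [ha, hb]
    rcases le_total 1 (3*q2) with h1 | h1
    · have hb2 : q2 ≤ 3 ∨ ¬ q2 ≤ 3 := le_or_gt q2 3 |>.imp id not_le.mpr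
      rcases hb2 with h2 | h2
      · simp only [if_pos h1, if_pos h2]
        rw [max_eq_left (by rw [sub_nonneg, div_le_iff₀ hq2]; nlinarith)]
        field_simp
        ring
      · simp only [if_pos h1, if_neg h2]
        push_neg at h2
        rw [max_eq_left (by
          rw [sub_nonneg, div_le_iff₀ hq2]
          have h3 : 3/q2*q2 = 3 := div_mul_cancel₀ 3 hq2'
          nlinarith)]
        field_simp
        ring
    · have h2 : q2 ≤ 3 := by nlinarith
      simp only [if_pos h2]
      by_cases h1' : 1 ≤ 3*q2
      · simp only [if_pos h1']
        rw [max_eq_left (by rw [sub_nonneg, div_le_iff₀ hq2]; nlinarith)]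
        field_simp; ring
      · simp only [if_neg h1']
        push_neg at h1'
        rw [max_eq_right (by rw [sub_nonpos, le_div_iff₀ hq2]; nlinarith)]
        ring
  · -- budget balance for bank 2
    rw [m11, m12]
    show max (2 + min 1 (3*q2) - q2) 0 + q2 * min 1 (3/q2) = 2 + q2*0 + (min 1 (3*q2) + q2 * 0)
    rw [ha, hb]
    rcases le_total q2 3 with h2 | h2
    · simp only [if_pos h2]
      by_cases h1 : 1 ≤ 3*q2
      · simp only [if_pos h1]
        rw [max_eq_left (by linarith)]; ring
      · simp only [if_neg h1]
        push_neg at h1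
        rw [max_eq_left (by nlinarith)]; ring
    · have h1 : 1 ≤ 3*q2 := by linarith
      by_cases h2' : q2 ≤ 3
      · simp only [if_pos h2', if_pos h1]
        rw [max_eq_left (by linarith)]; ring
      · simp only [if_neg h2', if_pos h1]
        push_neg at h2'
        rw [max_eq_right (by linarith)]
        field_simp
        norm_num
  · -- solvency bank 1
    rw [m21, m22]
    intro h
    refine ⟨?_, h12⟩
    show (1:ℝ) ≤ min 1 (3*q2)
    have hble : min 1 (3/q2) ≤ 1 := min_le_left _ _
    refine le_min le_rfl ?_
    nlinarith
  · -- solvency bank 2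
    rw [m11, m12]
    intro h
    refine ⟨h21, ?_⟩
    show (1:ℝ) ≤ min 1 (3/q2)
    have hale : min 1 (3*q2) ≤ 1 := min_le_left _ _
    refine le_min le_rfl ?_
    rw [le_div_iff₀ hq2]
    nlinarith
end

section
/- Fix $q \in \mathbb{R}^m_{++}$ and consider the optimization $P(w) = \arg\max\{h(p) : p \in [0,\bar p],\ q^\mathsf{T} p \le w\}$ where $h: [0,\bar p] \to \mathbb{R}$ is strictly concave, strictly increasing, and supermodular, and $\bar p \in \mathbb{R}^m_+$. Then for every $w \ge 0$ the maximizer $P(w)$ exists and is unique, the map $w \mapsto P(w)$ is nondecreasing in $w$ (componentwise), and $P(w) = \bar p$ whenever $w \ge q^\mathsf{T} \bar p$. -/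
/-- Monotone comparative statics for the payment problem (cf. Quah, used in
Lemma 3.1): maximizing a continuous, strictly concave, strictly increasing,
supermodular `h` over `[0, p̄] ∩ {qᵀp ≤ w}` has a unique maximizer `P(w)` for each
budget `w ≥ 0`; `P` is componentwise nondecreasing in `w`, and `P(w) = p̄` once
`w ≥ qᵀp̄`. -/
theorem stmt_19 (m : ℕ) (q : Fin m → ℝ) (hq : ∀ k, 0 < q k)
    (pbar : Fin m → ℝ) (hpbar : ∀ k, 0 ≤ pbar k)
    (h : (Fin m → ℝ) → ℝ)
    (hcont : ContinuousOn h (Set.Icc 0 pbar))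
    (hconc : StrictConcaveOn ℝ (Set.Icc 0 pbar) h)
    (hmono : ∀ p p' : Fin m → ℝ, p ∈ Set.Icc 0 pbar → p' ∈ Set.Icc 0 pbar →
      p ≤ p' → p ≠ p' → h p < h p')
    (hsup : ∀ p p' : Fin m → ℝ, p ∈ Set.Icc 0 pbar → p' ∈ Set.Icc 0 pbar →
      h p + h p' ≤ h (p ⊔ p') + h (p ⊓ p')) :
    ∃ P : ℝ → Fin m → ℝ,
      (∀ w, 0 ≤ w → P w ∈ Set.Icc 0 pbar ∧ (∑ k, q k * P w k) ≤ w ∧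
        ∀ p ∈ Set.Icc 0 pbar, (∑ k, q k * p k) ≤ w → h p ≤ h (P w)) ∧
      (∀ w, 0 ≤ w → ∀ p ∈ Set.Icc 0 pbar, (∑ k, q k * p k) ≤ w →
        (∀ p' ∈ Set.Icc 0 pbar, (∑ k, q k * p' k) ≤ w → h p' ≤ h p) → p = P w) ∧
      (∀ w w', 0 ≤ w → w ≤ w' → P w ≤ P w') ∧
      (∀ w, (∑ k, q k * pbar k) ≤ w → P w = pbar) := by
  classical
  set cost : (Fin m → ℝ) → ℝ := fun p => ∑ k, q k * p k with hcostdef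
  have cost_mono : ∀ {x y : Fin m → ℝ}, x ≤ y → cost x ≤ cost y := by
    intro x y hxy
    exact Finset.sum_le_sum fun k _ => mul_le_mul_of_nonneg_left (hxy k) (hq k).le
  have cost_inj : ∀ {x y : Fin m → ℝ}, x ≤ y → cost y ≤ cost x → x = y := by
    intro x y hxy hc
    by_contra hne
    have hk : ∃ k, x k < y k := by
      by_contra hall
      push_neg at hall
      exact hne (funext fun k => le_antisymm (hxy k) (hall k))
    obtain ⟨k, hk⟩ := hk
    have : cost x < cost y :=
      Finset.sum_lt_sum (fun i _ => mul_le_mul_of_nonneg_left (hxy i) (hq i).le)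
        ⟨k, Finset.mem_univ k, mul_lt_mul_of_pos_left hk (hq k)⟩
    linarith
  have cost_comb : ∀ (a b : ℝ) (x y : Fin m → ℝ),
      cost (a • x + b • y) = a * cost x + b * cost y := by
    intro a b x y
    simp only [hcostdef, Finset.mul_sum, ← Finset.sum_add_distrib]
    refine Finset.sum_congr rfl fun k _ => ?_
    simp only [Pi.add_apply, Pi.smul_apply, smul_eq_mul]
    ring
  have convIcc : Convex ℝ (Set.Icc (0 : Fin m → ℝ) pbar) := convex_Icc _ _
  have cost_cont : Continuous cost :=
    continuous_finset_sum _ fun k _ => continuous_const.mul (continuous_apply k)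
  -- existence of a maximizer
  have exmax : ∀ w : ℝ, 0 ≤ w → ∃ p : Fin m → ℝ,
      (p ∈ Set.Icc 0 pbar ∧ cost p ≤ w) ∧
      ∀ z ∈ Set.Icc (0 : Fin m → ℝ) pbar, cost z ≤ w → h z ≤ h p := by
    intro w hw
    have hcomp : IsCompact (Set.Icc (0 : Fin m → ℝ) pbar ∩ {p | cost p ≤ w}) :=
      isCompact_Icc.inter_right (isClosed_le cost_cont continuous_const)
    have hne : (Set.Icc (0 : Fin m → ℝ) pbar ∩ {p | cost p ≤ w}).Nonempty := by
      refine ⟨0, ⟨le_rfl, fun k => hpbar k⟩, ?_⟩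
      simp [hcostdef, hw]
    obtain ⟨p, hp, hmax⟩ :=
      hcomp.exists_isMaxOn hne (hcont.mono Set.inter_subset_left)
    exact ⟨p, ⟨hp.1, hp.2⟩, fun z hz hzc => hmax ⟨hz, hzc⟩⟩
  set P : ℝ → Fin m → ℝ :=
    fun w => if hw : 0 ≤ w then Classical.choose (exmax w hw) else 0 with hPdef
  have hPspec : ∀ w, ∀ hw : 0 ≤ w,
      (P w ∈ Set.Icc 0 pbar ∧ cost (P w) ≤ w) ∧
      ∀ z ∈ Set.Icc (0 : Fin m → ℝ) pbar, cost z ≤ w → h z ≤ h (P w) := by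
    intro w hw
    simp only [hPdef, dif_pos hw]
    exact Classical.choose_spec (exmax w hw)
  -- uniqueness of maximizers
  have uniq : ∀ w, 0 ≤ w → ∀ p ∈ Set.Icc (0 : Fin m → ℝ) pbar, cost p ≤ w →
      (∀ z ∈ Set.Icc (0 : Fin m → ℝ) pbar, cost z ≤ w → h z ≤ h p) → p = P w := by
    intro w hw p hpI hpc hpmax
    obtain ⟨⟨hPI, hPc⟩, hPmax⟩ := hPspec w hw
    by_contra hne
    have heq : h p = h (P w) := le_antisymm (hPmax p hpI hpc) (hpmax _ hPI hPc)
    have hm := hconc.2 hpI hPI hne (by norm_num : (0:ℝ) < 1/2)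
      (by norm_num : (0:ℝ) < 1/2) (by norm_num)
    have hmI : (1/2 : ℝ) • p + (1/2 : ℝ) • P w ∈ Set.Icc (0 : Fin m → ℝ) pbar :=
      convIcc hpI hPI (by norm_num) (by norm_num) (by norm_num)
    have hmc : cost ((1/2 : ℝ) • p + (1/2 : ℝ) • P w) ≤ w := by
      rw [cost_comb]; linarith
    have := hPmax _ hmI hmc
    rw [heq] at hm
    simp only [smul_eq_mul] at hm
    linarith
  refine ⟨P, ?_, ?_, ?_, ?_⟩
  · intro w hw
    obtain ⟨⟨hPI, hPc⟩, hPmax⟩ := hPspec w hw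
    exact ⟨hPI, hPc, fun p hpI hpc => hPmax p hpI hpc⟩
  · intro w hw p hpI hpc hpmax
    exact uniq w hw p hpI hpc hpmax
  · -- monotonicity
    intro w w' hw hww'
    have hw' : 0 ≤ w' := le_trans hw hww'
    obtain ⟨⟨hpI, hpc⟩, hpmax⟩ := hPspec w hw
    obtain ⟨⟨hp'I, hp'c⟩, hp'max⟩ := hPspec w' hw'
    set p := P w
    set p' := P w'
    set a := p ⊓ p' with hadef
    set b := p ⊔ p' with hbdef
    have haI : a ∈ Set.Icc (0 : Fin m → ℝ) pbar :=
      ⟨le_inf hpI.1 hp'I.1, le_trans inf_le_left hpI.2⟩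
    have hbI : b ∈ Set.Icc (0 : Fin m → ℝ) pbar :=
      ⟨le_trans hpI.1 le_sup_left, sup_le hpI.2 hp'I.2⟩
    have habsum : cost a + cost b = cost p + cost p' := by
      simp only [hcostdef, ← Finset.sum_add_distrib]
      refine Finset.sum_congr rfl fun k _ => ?_
      have : a k + b k = p k + p' k := by
        simp only [hadef, hbdef, Pi.inf_apply, Pi.sup_apply]
        exact min_add_max _ _
      rw [← mul_add, ← mul_add, this]
    have hcale : cost a ≤ cost p := cost_mono inf_le_left
    have hcale' : cost a ≤ cost p' := cost_mono inf_le_right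
    rcases le_or_gt (cost p') (cost a) with hd0 | hd0
    · -- degenerate case: a = p', i.e. p' ≤ p
      have hap' : a = p' := cost_inj inf_le_right hd0
      have hp'lep : p' ≤ p := hap' ▸ inf_le_left
      have hp'cw : cost p' ≤ w := le_trans hd0 (le_trans hcale hpc)
      have heq : p' = P w := by
        refine uniq w hw p' hp'I hp'cw fun z hzI hzc => ?_
        exact le_trans (hpmax z hzI hzc) (hp'max p hpI (le_trans hpc hww'))
      exact le_of_eq heq.symm
    · -- main case
      set d : ℝ := cost p' - cost a with hddef
      have hdpos : 0 < d := by simp only [hddef]; linarith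
      set lam : ℝ := max 0 (cost p' - w) / d with hlamdef
      have hlam0 : 0 ≤ lam := div_nonneg (le_max_left _ _) hdpos.le
      have hlamd : lam * d = max 0 (cost p' - w) := by
        rw [hlamdef, div_mul_cancel₀ _ hdpos.ne']
      have hlam1 : lam ≤ 1 := by
        rw [hlamdef, div_le_one hdpos]
        refine max_le hdpos.le ?_
        have : cost a ≤ w := le_trans hcale hpc
        simp only [hddef]; linarith
      set u := lam • a + (1 - lam) • p' with hudef
      set v := lam • b + (1 - lam) • p with hvdef
      have huI : u ∈ Set.Icc (0 : Fin m → ℝ) pbar :=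
        convIcc haI hp'I hlam0 (by linarith) (by ring)
      have hvI : v ∈ Set.Icc (0 : Fin m → ℝ) pbar :=
        convIcc hbI hpI hlam0 (by linarith) (by ring)
      have hucw : cost u ≤ w := by
        rw [hudef, cost_comb]
        have h1 : cost p' - w ≤ max 0 (cost p' - w) := le_max_right _ _
        nlinarith [hlamd]
      have hvcw' : cost v ≤ w' := by
        rw [hvdef, cost_comb]
        have h1 : max 0 (cost p' - w) ≤ w' - cost p :=
          max_le (by linarith) (by linarith)
        have h2 : cost b = cost p + d := by simp only [hddef]; linarith
        nlinarith [hlamd]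
      have hhu : lam * h a + (1 - lam) * h p' ≤ h u := by
        have := hconc.concaveOn.2 haI hp'I hlam0 (by linarith : (0:ℝ) ≤ 1 - lam)
          (by ring : lam + (1 - lam) = 1)
        simpa [smul_eq_mul] using this
      have hhv : lam * h b + (1 - lam) * h p ≤ h v := by
        have := hconc.concaveOn.2 hbI hpI hlam0 (by linarith : (0:ℝ) ≤ 1 - lam)
          (by ring : lam + (1 - lam) = 1)
        simpa [smul_eq_mul] using this
      have hsupab : h p + h p' ≤ h b + h a := hsup p p' hpI hp'I
      have humax : h u ≤ h p := hpmax u huI hucw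
      have hvmax : h v ≤ h p' := hp'max v hvI hvcw'
      have hup : h p ≤ h u := by nlinarith
      have huPw : u = P w := by
        refine uniq w hw u huI hucw fun z hzI hzc => ?_
        exact le_trans (hpmax z hzI hzc) hup
      intro k
      have hak : a k ≤ p' k := (inf_le_right : p ⊓ p' ≤ p') k
      have : p k = lam * a k + (1 - lam) * p' k := by
        conv_lhs => rw [show p = u from huPw.symm]
        simp [hudef]
      rw [this]
      nlinarith
  · -- P w = pbar when cost pbar ≤ w
    intro w hwc
    have hpbarI : pbar ∈ Set.Icc (0 : Fin m → ℝ) pbar := ⟨fun k => hpbar k, le_rfl⟩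
    have hcostpbar : (0:ℝ) ≤ cost pbar :=
      Finset.sum_nonneg fun k _ => mul_nonneg (hq k).le (hpbar k)
    have hw : (0:ℝ) ≤ w := le_trans hcostpbar hwc
    refine (uniq w hw pbar hpbarI hwc fun z hzI _ => ?_).symm
    rcases eq_or_ne z pbar with rfl | hne
    · exact le_rfl
    · exact (hmono z pbar hzI hpbarI hzI.2 hne).le
end
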